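/- Let ρ ∈ (0,1) be an irrational number whose continued fraction expansion [r_0, r_1, r_2, ...] is periodic with period n. Let λ_{kn} = (θ_0 θ_1 ⋯ θ_{n−1})^k where θ_i = [r_i, r_{i+1}, ...] are the continued fraction tails, and let q_m, p_m denote the convergent denominators and numerators of ρ. Then there exists a constant A = A(ρ, m, n) and α = √((1+θ)/2) with θ = (√5−1)/2, such that for all k: q_{(k+m)n} · λ_{kn}^2 < A · α^{kn}. -/
import Mathlib


/-- For a periodic continued fraction of period `n`, with scaling ratios
`λ_{kn} = (θ_0⋯θ_{n-1})^k`, one has `q_{(k+m)n} λ_{kn}² < A α^{kn}` with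
`α = √((1+θ)/2)`, `θ = (√5−1)/2`. `Q (j+1)` plays the role of `q_j`. -/
theorem stmt_3 (n m : ℕ) (hn : 1 ≤ n)
    (r : ℕ → ℕ) (hr : ∀ i, 1 ≤ r i) (hper : ∀ i, r (i + n) = r i)
    (t : ℕ → ℝ) (ht : ∀ i, t i ∈ Set.Ioo (0 : ℝ) 1)
    (htrec : ∀ i, t i = 1 / ((r i : ℝ) + t (i + 1)))
    (Q : ℕ → ℕ) (hQ0 : Q 0 = 0) (hQ1 : Q 1 = 1)
    (hQrec : ∀ j, Q (j + 2) = r j * Q (j + 1) + Q j) :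
    ∃ A > 0, ∀ k : ℕ,
      (Q ((k + m) * n + 1) : ℝ) * ((∏ i ∈ Finset.range n, t i) ^ k) ^ 2 <
        A * (Real.sqrt ((1 + (Real.sqrt 5 - 1) / 2) / 2)) ^ (k * n) := by
  have ht0 : ∀ i, 0 < t i := fun i => (ht i).1
  have ht1 : ∀ i, t i < 1 := fun i => (ht i).2
  have hr1 : ∀ i, (1:ℝ) ≤ (r i : ℝ) := fun i => by exact_mod_cast hr i
  have hts : ∀ i, t i * ((r i : ℝ) + t (i+1)) = 1 := by
    intro i
    have hd : (0:ℝ) < (r i : ℝ) + t (i+1) := by nlinarith [ht0 (i+1), hr1 i]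
    rw [htrec i]; field_simp
  have hpair : ∀ i, t i * t (i+1) < 1/2 := by
    intro i
    have h1 : t i * t (i+1) < t i * (r i : ℝ) := by
      have := ht1 (i+1); have := hr1 i; have := ht0 i; nlinarith
    nlinarith [hts i]
  -- contraction identity
  have hdiff : ∀ i, t i - t (i+n) = t i * t (i+n) * (t (i+n+1) - t (i+1)) := by
    intro i
    have h1 := hts i
    have h2 := hts (i+n)
    rw [hper i] at h2
    linear_combination (t (i+n)) * h1 - (t i) * h2
  have hboundj : ∀ j i, |t i - t (i+n)| ≤ ∏ l ∈ Finset.range j, t (i+l) := by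
    intro j
    induction j with
    | zero =>
      intro i; simp only [Finset.range_zero, Finset.prod_empty]
      rw [abs_le]
      constructor <;> nlinarith [ht0 i, ht1 i, ht0 (i+n), ht1 (i+n)]
    | succ j ih =>
      intro i
      have hprodeq : ∏ l ∈ Finset.range (j+1), t (i+l)
          = (∏ l ∈ Finset.range j, t (i+1+l)) * t i := by
        rw [Finset.prod_range_succ']
        congr 1
        exact Finset.prod_congr rfl (fun l _ => by rw [show i + (l+1) = i+1+l by omega])
      rw [hprodeq]
      have habs : |t i - t (i+n)| = t i * t (i+n) * |t (i+1) - t (i+1+n)| := by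
        rw [hdiff i, abs_mul, abs_of_pos (mul_pos (ht0 i) (ht0 (i+n))), abs_sub_comm,
          show i+n+1 = i+1+n by omega]
      rw [habs]
      have hih := ih (i+1)
      have hprodnn : (0:ℝ) ≤ ∏ l ∈ Finset.range j, t (i+1+l) :=
        Finset.prod_nonneg (fun l _ => (ht0 _).le)
      have h1 : t (i+n) * |t (i+1) - t (i+1+n)| ≤ ∏ l ∈ Finset.range j, t (i+1+l) := by
        calc t (i+n) * |t (i+1) - t (i+1+n)| ≤ 1 * |t (i+1) - t (i+1+n)| := by
              apply mul_le_mul_of_nonneg_right (ht1 (i+n)).le (abs_nonneg _)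
          _ = |t (i+1) - t (i+1+n)| := one_mul _
          _ ≤ _ := hih
      calc t i * t (i+n) * |t (i+1) - t (i+1+n)|
          = (t (i+n) * |t (i+1) - t (i+1+n)|) * t i := by ring
        _ ≤ (∏ l ∈ Finset.range j, t (i+1+l)) * t i :=
            mul_le_mul_of_nonneg_right h1 (ht0 i).le
  have hhalf : ∀ i j, ∏ l ∈ Finset.range (2*j), t (i+l) ≤ (1/2:ℝ)^j := by
    intro i j
    induction j with
    | zero => simp
    | succ j ih =>
      have h2 : 2*(j+1) = 2*j + 1 + 1 := by omega
      rw [h2, Finset.prod_range_succ, Finset.prod_range_succ]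
      have hp : t (i + 2*j) * t (i + (2*j+1)) < 1/2 := by
        have := hpair (i + 2*j)
        rwa [show i + 2*j + 1 = i + (2*j+1) by omega] at this
      have hprodnn : (0:ℝ) ≤ ∏ l ∈ Finset.range (2*j), t (i+l) :=
        Finset.prod_nonneg (fun l _ => (ht0 _).le)
      calc (∏ l ∈ Finset.range (2*j), t (i+l)) * t (i + 2*j) * t (i + (2*j+1))
          = (∏ l ∈ Finset.range (2*j), t (i+l)) * (t (i + 2*j) * t (i + (2*j+1))) := by ring
        _ ≤ (1/2:ℝ)^j * (1/2) := by
            exact mul_le_mul ih hp.le (mul_pos (ht0 _) (ht0 _)).le (by positivity)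
        _ = (1/2:ℝ)^(j+1) := by ring
  have tper : ∀ i, t (i + n) = t i := by
    intro i
    have h0 : |t i - t (i+n)| = 0 := by
      by_contra h
      have hd : 0 < |t i - t (i+n)| := lt_of_le_of_ne (abs_nonneg _) (Ne.symm h)
      obtain ⟨j, hj⟩ := exists_pow_lt_of_lt_one hd (by norm_num : (1/2:ℝ) < 1)
      have := (hboundj (2*j) i).trans (hhalf i j)
      linarith
    have := abs_eq_zero.mp h0
    linarith [sub_eq_zero.mp this]
  have tperk : ∀ k i, t (i + k*n) = t i := by
    intro k
    induction k with
    | zero => intro i; simp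
    | succ k ih =>
      intro i
      rw [show i + (k+1)*n = (i+n) + k*n by ring, ih (i+n), tper i]
  set P : ℝ := ∏ i ∈ Finset.range n, t i with hP
  have hPpos : 0 < P := Finset.prod_pos (fun i _ => ht0 i)
  have Pprod : ∀ k, ∏ i ∈ Finset.range (k*n), t i = P ^ k := by
    intro k
    induction k with
    | zero => simp
    | succ k ih =>
      rw [show (k+1)*n = k*n + n by ring, Finset.prod_range_add, ih]
      have : ∏ i ∈ Finset.range n, t (k*n + i) = P := by
        rw [hP]
        exact Finset.prod_congr rfl (fun i _ => by
          rw [show k*n + i = i + k*n by omega, tperk k i])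
      rw [this]; ring
  have hQid : ∀ j, (∏ i ∈ Finset.range j, t i) * ((Q (j+1) : ℝ) + (Q j : ℝ) * t j) = 1 := by
    intro j
    induction j with
    | zero => simp [hQ0, hQ1]
    | succ j ih =>
      rw [Finset.prod_range_succ, hQrec j]
      push_cast
      linear_combination ih + (∏ i ∈ Finset.range j, t i) * (Q (j+1) : ℝ) * hts j
  have hQle : ∀ j, (Q (j+1) : ℝ) * ∏ i ∈ Finset.range j, t i ≤ 1 := by
    intro j
    have hp : (0:ℝ) < ∏ i ∈ Finset.range j, t i := Finset.prod_pos (fun i _ => ht0 i)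
    nlinarith [hQid j, mul_nonneg (mul_nonneg (Nat.cast_nonneg (Q j)) (ht0 j).le) hp.le]
  -- product over shifted range equals P
  have hshift : ∏ i ∈ Finset.range n, t (i+1) = P := by
    have h1 : ∏ i ∈ Finset.range (n+1), t i = (∏ i ∈ Finset.range n, t (i+1)) * t 0 :=
      Finset.prod_range_succ' t n
    have h2 : ∏ i ∈ Finset.range (n+1), t i = P * t n := Finset.prod_range_succ t n
    have h3 : t n = t 0 := by have := tper 0; rwa [Nat.zero_add] at this
    have := h1.symm.trans h2
    rw [h3] at this
    exact mul_right_cancel₀ (ne_of_gt (ht0 0)) this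
  have hP2 : P^2 ≤ (1/2:ℝ)^n := by
    have : P^2 = ∏ i ∈ Finset.range n, (t i * t (i+1)) := by
      rw [Finset.prod_mul_distrib, hshift]; ring
    rw [this]
    calc ∏ i ∈ Finset.range n, (t i * t (i+1))
        ≤ ∏ i ∈ Finset.range n, (1/2:ℝ) := by
          apply Finset.prod_le_prod
          · intro i _; exact (mul_pos (ht0 i) (ht0 (i+1))).le
          · intro i _; exact (hpair i).le
      _ = (1/2:ℝ)^n := by rw [Finset.prod_const, Finset.card_range]
  set α : ℝ := Real.sqrt ((1 + (Real.sqrt 5 - 1) / 2) / 2) with hα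
  have hs5 : (1:ℝ) < Real.sqrt 5 := by
    nlinarith [Real.sq_sqrt (by norm_num : (5:ℝ) ≥ 0), Real.sqrt_nonneg 5]
  have hargpos : (0:ℝ) < (1 + (Real.sqrt 5 - 1) / 2) / 2 := by nlinarith
  have hα2 : α^2 = (1 + (Real.sqrt 5 - 1) / 2) / 2 := Real.sq_sqrt hargpos.le
  have hαpos : 0 < α := Real.sqrt_pos.mpr hargpos
  have hhalflt : (1/2:ℝ) < α^2 := by rw [hα2]; nlinarith
  have hPα : P < α^n := by
    have h1 : P^2 < (α^n)^2 := by
      calc P^2 ≤ (1/2:ℝ)^n := hP2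
        _ < (α^2)^n := by
            apply pow_lt_pow_left₀ hhalflt (by norm_num) (by omega)
        _ = (α^n)^2 := by rw [← pow_mul, ← pow_mul, Nat.mul_comm]
    by_contra h
    push_neg at h
    have := pow_le_pow_left₀ (by positivity) h 2
    linarith
  refine ⟨1/P^m + 1, add_pos (div_pos one_pos (pow_pos hPpos m)) one_pos, fun k => ?_⟩
  have hq : (Q ((k+m)*n + 1) : ℝ) * P^(k+m) ≤ 1 := by
    have := hQle ((k+m)*n)
    rwa [Pprod (k+m)] at this
  have h2 : (Q ((k+m)*n + 1) : ℝ) * (P^k)^2 * P^m ≤ P^k := by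
    have := mul_le_mul_of_nonneg_right hq (pow_nonneg hPpos.le k)
    calc (Q ((k+m)*n + 1) : ℝ) * (P^k)^2 * P^m
        = (Q ((k+m)*n + 1) : ℝ) * P^(k+m) * P^k := by ring
      _ ≤ 1 * P^k := this
      _ = P^k := one_mul _
  have h3 : (Q ((k+m)*n + 1) : ℝ) * (P^k)^2 ≤ P^k / P^m :=
    (le_div_iff₀ (pow_pos hPpos m)).mpr h2
  have h4 : P^k ≤ α^(k*n) := by
    calc P^k ≤ (α^n)^k := pow_le_pow_left₀ hPpos.le hPα.le k
      _ = α^(k*n) := by rw [← pow_mul, Nat.mul_comm]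
  have hαkn : (0:ℝ) < α^(k*n) := pow_pos hαpos _
  calc (Q ((k+m)*n + 1) : ℝ) * (P^k)^2 ≤ P^k / P^m := h3
    _ ≤ α^(k*n) / P^m := (div_le_div_iff_of_pos_right (pow_pos hPpos m)).mpr h4
    _ = (1/P^m) * α^(k*n) := by ring
    _ < (1/P^m + 1) * α^(k*n) := by
        have : (0:ℝ) < α^(k*n) := hαkn
        nlinarith
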